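/- Let L be an embedded polygonal arc in ℝ³ given by vertices p₀, p₁, …, p_n (n ≥ 1). Then for every unit vector u ∈ ℝ³ and every δ > 0 there exists a unit vector u′ with ‖u′ − u‖ < δ such that the orthogonal projection π onto the orthogonal complement of the span of u′ satisfies: (i) π is injective on each edge segment [p_{i−1}, pᵢ]; (ii) every point of the plane has at most two preimages in L under π; (iii) whenever x ≠ y are points of L with π x = π y, then x and y are not vertices of L, they lie on two distinct edge segments [p_{i−1}, pᵢ] and [p_{j−1}, pⱼ] with i ≠ j, and the projected edge directions π(pᵢ − p_{i−1}) and π(pⱼ − p_{j−1}) are linearly independent; (iv) the set of points of the plane having exactly two preimages in L is finite. (Existence part of Theorem 1.1: the projection along u is δ-approximated by a projection whose image of L is an arc diagram.) -/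

import Mathlib

open Module Set

/-- ℝ³ as a Euclidean space. -/
local notation "E3" => EuclideanSpace ℝ (Fin 3)

/-- The orthogonal projection of ℝ³ onto the orthogonal complement of the span of `u`,
i.e. the projection along the vector `u` onto the plane `P_u`. -/
noncomputable def projAlong (u : E3) : E3 →L[ℝ] ↥((ℝ ∙ u)ᗮ) :=
  Submodule.orthogonalProjection ((ℝ ∙ u)ᗮ)


namespace UDE



def dot (x y : E3) : ℝ := x 0 * y 0 + x 1 * y 1 + x 2 * y 2
def cross (x y : E3) : E3 := WithLp.toLp 2 ![x 1 * y 2 - x 2 * y 1, x 2 * y 0 - x 0 * y 2, x 0 * y 1 - x 1 * y 0]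
def trip (x y z : E3) : ℝ := dot (cross x y) z

@[simp] lemma cross_apply_0 (x y : E3) : cross x y 0 = x 1 * y 2 - x 2 * y 1 := rfl
@[simp] lemma cross_apply_1 (x y : E3) : cross x y 1 = x 2 * y 0 - x 0 * y 2 := rfl
@[simp] lemma cross_apply_2 (x y : E3) : cross x y 2 = x 0 * y 1 - x 1 * y 0 := rfl
@[simp] lemma smul_app (c : ℝ) (x : E3) (i : Fin 3) : (c • x) i = c * x i := rfl
@[simp] lemma add_app (x y : E3) (i : Fin 3) : (x + y) i = x i + y i := rfl
@[simp] lemma sub_app (x y : E3) (i : Fin 3) : (x - y) i = x i - y i := rfl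
@[simp] lemma zero_app (i : Fin 3) : (0 : E3) i = 0 := rfl

lemma ext3 {x y : E3} (h0 : x 0 = y 0) (h1 : x 1 = y 1) (h2 : x 2 = y 2) : x = y := by
  ext i; fin_cases i <;> assumption

lemma trip_expand (x y z : E3) : trip x y z =
    (x 1 * y 2 - x 2 * y 1) * z 0 + (x 2 * y 0 - x 0 * y 2) * z 1
      + (x 0 * y 1 - x 1 * y 0) * z 2 := rfl

-- antisymmetry / repeats
lemma trip_swap12 (x y z : E3) : trip x y z = - trip y x z := by simp [trip_expand]; ring
lemma trip_swap23 (x y z : E3) : trip x y z = - trip x z y := by simp [trip_expand]; ring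
lemma trip_swap13 (x y z : E3) : trip x y z = - trip z y x := by simp [trip_expand]; ring
lemma trip_cyclic (x y z : E3) : trip x y z = trip y z x := by simp [trip_expand]; ring
@[simp] lemma trip_rep12 (x z : E3) : trip x x z = 0 := by simp [trip_expand]; ring
@[simp] lemma trip_rep23 (x y : E3) : trip x y y = 0 := by simp [trip_expand]; ring
@[simp] lemma trip_rep13 (x y : E3) : trip x y x = 0 := by simp [trip_expand]; ring

-- linearity (first argument)
lemma trip_add1 (a b y z : E3) : trip (a + b) y z = trip a y z + trip b y z := by
  simp [trip_expand]; ring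
lemma trip_sub1 (a b y z : E3) : trip (a - b) y z = trip a y z - trip b y z := by
  simp [trip_expand]; ring
lemma trip_smul1 (c : ℝ) (a y z : E3) : trip (c • a) y z = c * trip a y z := by
  simp [trip_expand]; ring
lemma trip_add2 (x a b z : E3) : trip x (a + b) z = trip x a z + trip x b z := by
  simp [trip_expand]; ring
lemma trip_sub2 (x a b z : E3) : trip x (a - b) z = trip x a z - trip x b z := by
  simp [trip_expand]; ring
lemma trip_smul2 (c : ℝ) (x a z : E3) : trip x (c • a) z = c * trip x a z := by
  simp [trip_expand]; ring
lemma trip_add3 (x y a b : E3) : trip x y (a + b) = trip x y a + trip x y b := by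
  simp [trip_expand]; ring
lemma trip_sub3 (x y a b : E3) : trip x y (a - b) = trip x y a - trip x y b := by
  simp [trip_expand]; ring
lemma trip_smul3 (c : ℝ) (x y a : E3) : trip x y (c • a) = c * trip x y a := by
  simp [trip_expand]; ring
@[simp] lemma trip_zero3 (x y : E3) : trip x y 0 = 0 := by simp [trip_expand]
@[simp] lemma trip_zero1 (y z : E3) : trip 0 y z = 0 := by simp [trip_expand]

-- dot lemmas
lemma dot_comm (x y : E3) : dot x y = dot y x := by simp [dot]; ring
lemma dot_smul2 (c : ℝ) (x y : E3) : dot x (c • y) = c * dot x y := by simp [dot]; ring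
lemma dot_add2 (x a b : E3) : dot x (a + b) = dot x a + dot x b := by simp [dot]; ring
lemma dot_sub2 (x a b : E3) : dot x (a - b) = dot x a - dot x b := by simp [dot]; ring
@[simp] lemma dot_zero2 (x : E3) : dot x 0 = 0 := by simp [dot]
@[simp] lemma dot_zero1 (x : E3) : dot 0 x = 0 := by simp [dot]

lemma dot_cross_self1 (x y : E3) : dot (cross x y) x = 0 := by simp [dot]; ring
lemma dot_cross_self2 (x y : E3) : dot (cross x y) y = 0 := by simp [dot]; ring

lemma dot_self_nonneg (x : E3) : 0 ≤ dot x x := by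
  simp only [dot]
  nlinarith [sq_nonneg (x 0), sq_nonneg (x 1), sq_nonneg (x 2)]

lemma eq_zero_of_dot_self (x : E3) (h : dot x x = 0) : x = 0 := by
  simp only [dot] at h
  refine ext3 ?_ ?_ ?_ <;> simp <;> nlinarith [sq_nonneg (x 0), sq_nonneg (x 1), sq_nonneg (x 2)]

lemma dot_self_ne_zero {x : E3} (h : x ≠ 0) : dot x x ≠ 0 :=
  fun hc => h (eq_zero_of_dot_self x hc)

@[simp] lemma cross_self (x : E3) : cross x x = 0 := by
  refine ext3 ?_ ?_ ?_ <;> simp <;> ring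

lemma cross_smul2 (c : ℝ) (x y : E3) : cross x (c • y) = c • cross x y := by
  refine ext3 ?_ ?_ ?_ <;> simp <;> ring

lemma cross_anticomm (x y : E3) : cross x y = - cross y x := by
  refine ext3 ?_ ?_ ?_ <;> simp [PiLp.neg_apply] <;> ring

/-- BAC-CAB: a × (b × c) = (a·c) b − (a·b) c -/
lemma bac_cab (a b c : E3) : cross a (cross b c) = dot a c • b - dot a b • c := by
  refine ext3 ?_ ?_ ?_ <;> simp [dot] <;> ring

/-- If `x ≠ 0` and `cross x y = 0` then `y` is a multiple of `x`. -/
lemma exists_smul_of_cross_eq_zero {x y : E3} (hx : x ≠ 0) (h : cross x y = 0) :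
    ∃ t : ℝ, y = t • x := by
  have h0 := congrArg (fun v : E3 => v 0) h
  have h1 := congrArg (fun v : E3 => v 1) h
  have h2 := congrArg (fun v : E3 => v 2) h
  simp only [cross_apply_0, cross_apply_1, cross_apply_2, zero_app] at h0 h1 h2
  have hex : x 0 ≠ 0 ∨ x 1 ≠ 0 ∨ x 2 ≠ 0 := by
    by_contra hc
    push_neg at hc
    exact hx (ext3 hc.1 hc.2.1 hc.2.2)
  rcases hex with hx0 | hx1 | hx2
  · refine ⟨y 0 / x 0, ext3 ?_ ?_ ?_⟩ <;> simp <;> field_simp <;> linarith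
  · refine ⟨y 1 / x 1, ext3 ?_ ?_ ?_⟩ <;> simp <;> field_simp <;> linarith
  · refine ⟨y 2 / x 2, ext3 ?_ ?_ ?_⟩ <;> simp <;> field_simp <;> linarith

lemma dot_smul1 (c : ℝ) (x y : E3) : dot (c • x) y = c * dot x y := by
  simp [dot]; ring

/-- span extraction: if `c` is det-orthogonal to `a, b` with `cross a b ≠ 0`,
then `c ∈ span {a, b}` explicitly. -/
lemma exists_comb_of_trip_eq_zero {a b c : E3} (hab : cross a b ≠ 0)
    (h : trip a b c = 0) : ∃ α β : ℝ, c = α • a + β • b := by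
  set κ := cross a b with hκ
  set w := cross κ c with hw
  have k2 : dot κ κ ≠ 0 := dot_self_ne_zero hab
  have h1 : cross κ w = dot κ c • κ - dot κ κ • c := bac_cab κ κ c
  have hdc : dot κ c = 0 := h
  rw [hdc, zero_smul, zero_sub] at h1
  have h2 : cross κ w = -(dot w b • a - dot w a • b) := by
    rw [cross_anticomm κ w, hκ, bac_cab w a b]
  have h3 : dot κ κ • c = dot w b • a - dot w a • b := by
    have h4 := h1.symm.trans h2
    exact neg_injective h4
  refine ⟨dot w b / dot κ κ, -(dot w a) / dot κ κ, ?_⟩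
  have h5 : c = (dot κ κ)⁻¹ • (dot w b • a - dot w a • b) := by
    rw [← h3, smul_smul, inv_mul_cancel₀ k2, one_smul]
  rw [h5, smul_sub, smul_smul, smul_smul, div_eq_inv_mul, div_eq_inv_mul, sub_eq_add_neg,
    ← neg_smul]
  ring_nf

/-- three vectors orthogonal to a nonzero vector have zero triple product -/
lemma trip_eq_zero_of_orth {ν a b c : E3} (hν : ν ≠ 0) (ha : dot ν a = 0)
    (hb : dot ν b = 0) (hc : dot ν c = 0) : trip a b c = 0 := by
  have h1 : cross ν (cross a b) = dot ν b • a - dot ν a • b := bac_cab ν a b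
  rw [ha, hb, zero_smul, zero_smul, sub_zero] at h1
  obtain ⟨t, ht⟩ := exists_smul_of_cross_eq_zero hν h1
  show dot (cross a b) c = 0
  rw [ht, dot_smul1, hc, mul_zero]

/-- a nonzero normal exists to any single vector -/
lemma exists_normal1 (x : E3) : ∃ ν : E3, ν ≠ 0 ∧ dot ν x = 0 := by
  by_cases h0 : x 0 = 0
  · by_cases h1 : x 1 = 0
    · exact ⟨!₂[1, 0, 0], by
        constructor
        · intro hc
          have := congrArg (fun v : E3 => v 0) hc
          simp at this
        · simp [dot, h0, h1]⟩
    · exact ⟨!₂[0, x 2, -(x 1)], by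
        constructor
        · intro hc
          have := congrArg (fun v : E3 => v 2) hc
          simp at this
          exact h1 this
        · simp [dot]; ring⟩
  · exact ⟨!₂[x 1, -(x 0), 0], by
      constructor
      · intro hc
        have := congrArg (fun v : E3 => v 1) hc
        simp at this
        exact h0 this
      · simp [dot]; ring⟩

/-- a nonzero common normal exists to any two vectors -/
lemma exists_normal2 (x y : E3) : ∃ ν : E3, ν ≠ 0 ∧ dot ν x = 0 ∧ dot ν y = 0 := by
  by_cases hc : cross x y = 0
  · by_cases hx : x = 0
    · obtain ⟨ν, hν, hd⟩ := exists_normal1 y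
      exact ⟨ν, hν, by simp [hx], hd⟩
    · obtain ⟨t, ht⟩ := exists_smul_of_cross_eq_zero hx hc
      obtain ⟨ν, hν, hd⟩ := exists_normal1 x
      exact ⟨ν, hν, hd, by rw [ht, dot_smul2, hd, mul_zero]⟩
  · exact ⟨cross x y, hc, dot_cross_self1 x y, dot_cross_self2 x y⟩

/-- a nonzero common normal exists to three vectors with vanishing triple product -/
lemma exists_normal3 {x y z : E3} (h : trip x y z = 0) :
    ∃ ν : E3, ν ≠ 0 ∧ dot ν x = 0 ∧ dot ν y = 0 ∧ dot ν z = 0 := by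
  by_cases hxy : cross x y = 0
  · by_cases hx : x = 0
    · obtain ⟨ν, hν, hd1, hd2⟩ := exists_normal2 y z
      exact ⟨ν, hν, by simp [hx], hd1, hd2⟩
    · obtain ⟨t, ht⟩ := exists_smul_of_cross_eq_zero hx hxy
      by_cases hxz : cross x z = 0
      · obtain ⟨r, hr⟩ := exists_smul_of_cross_eq_zero hx hxz
        obtain ⟨ν, hν, hd⟩ := exists_normal1 x
        exact ⟨ν, hν, hd, by rw [ht, dot_smul2, hd, mul_zero],
          by rw [hr, dot_smul2, hd, mul_zero]⟩
      · refine ⟨cross x z, hxz, dot_cross_self1 x z, ?_, dot_cross_self2 x z⟩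
        rw [ht, dot_smul2, dot_cross_self1, mul_zero]
  · refine ⟨cross x y, hxy, dot_cross_self1 x y, dot_cross_self2 x y, h⟩

lemma continuous_dot (ν : E3) : Continuous fun e : E3 => dot ν e := by
  have h : ∀ i : Fin 3, Continuous fun e : E3 => e i := by
    intro i
    exact (EuclideanSpace.proj i).continuous
  unfold dot
  exact (((continuous_const.mul (h 0)).add (continuous_const.mul (h 1))).add
    (continuous_const.mul (h 2)))

lemma closed_hyperplane (ν : E3) : IsClosed {e : E3 | dot ν e = 0} :=
  isClosed_eq (continuous_dot ν) continuous_const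

lemma dot_add2' (ν a b : E3) : dot ν (a + b) = dot ν a + dot ν b := by simp [dot]; ring

lemma empty_interior_hyperplane {ν : E3} (hν : ν ≠ 0) :
    interior {e : E3 | dot ν e = 0} = ∅ := by
  rw [eq_empty_iff_forall_notMem]
  intro x0 hx0
  rw [mem_interior_iff_mem_nhds, Metric.mem_nhds_iff] at hx0
  obtain ⟨r, hr, hball⟩ := hx0
  have key : ∀ y : E3, dot ν y = 0 := by
    intro y
    have hs : ∀ s : ℝ, |s| * ‖y‖ < r → dot ν (x0 + s • y) = 0 := by
      intro s hsy
      apply hball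
      rw [Metric.mem_ball, dist_eq_norm]
      simpa [norm_smul] using hsy
    set s0 : ℝ := r / (2 * (‖y‖ + 1)) with hs0
    have hy1 : 0 < ‖y‖ + 1 := by positivity
    have hs0pos : 0 < s0 := by positivity
    have hlt : |s0| * ‖y‖ < r := by
      rw [abs_of_pos hs0pos]
      have h1 : s0 * ‖y‖ < s0 * (‖y‖ + 1) := by nlinarith
      have h2 : s0 * (‖y‖ + 1) = r / 2 := by
        rw [hs0]
        field_simp
      have : r / 2 < r := by linarith
      linarith
    have h0 : dot ν x0 = 0 := hball (by simpa [Metric.mem_ball] using hr)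
    have := hs s0 hlt
    rw [dot_add2', h0, dot_smul2] at this
    have : s0 * dot ν y = 0 := by linarith
    rcases mul_eq_zero.mp this with h | h
    · exact absurd h (ne_of_gt hs0pos)
    · exact h
  exact dot_self_ne_zero hν (key ν)

/-- if a quadratic expression `(ν₁·e)(ν₂·e) - (ν₃·e)(ν₄·e)` vanishes on a ball,
it vanishes everywhere. -/
lemma quad_vanish {ν1 ν2 ν3 ν4 : E3} {x0 : E3} {r : ℝ} (hr : 0 < r)
    (h : ∀ e ∈ Metric.ball x0 r, dot ν1 e * dot ν2 e - dot ν3 e * dot ν4 e = 0) :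
    ∀ e : E3, dot ν1 e * dot ν2 e - dot ν3 e * dot ν4 e = 0 := by
  intro y
  -- expand along the segment x0 + s y
  set A : ℝ := dot ν1 y * dot ν2 y - dot ν3 y * dot ν4 y with hA
  set B : ℝ := dot ν1 x0 * dot ν2 y + dot ν1 y * dot ν2 x0
      - dot ν3 x0 * dot ν4 y - dot ν3 y * dot ν4 x0 with hB
  set C : ℝ := dot ν1 x0 * dot ν2 x0 - dot ν3 x0 * dot ν4 x0 with hC
  have hpoly : ∀ s : ℝ, |s| * ‖y‖ < r → A * s ^ 2 + B * s + C = 0 := by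
    intro s hsy
    have hmem : x0 + s • y ∈ Metric.ball x0 r := by
      rw [Metric.mem_ball, dist_eq_norm]
      simpa [norm_smul] using hsy
    have := h _ hmem
    rw [dot_add2', dot_add2', dot_add2', dot_add2', dot_smul2, dot_smul2, dot_smul2, dot_smul2]
      at this
    rw [hA, hB, hC]
    ring_nf
    ring_nf at this
    linarith
  set ε : ℝ := r / (2 * (‖y‖ + 1)) with hε
  have hy1 : 0 < ‖y‖ + 1 := by positivity
  have hεpos : 0 < ε := by positivity
  have hok : ∀ s : ℝ, |s| ≤ ε → A * s ^ 2 + B * s + C = 0 := by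
    intro s hs
    apply hpoly
    have h1 : |s| * ‖y‖ ≤ ε * ‖y‖ := by
      apply mul_le_mul_of_nonneg_right hs (norm_nonneg y)
    have h2 : ε * ‖y‖ < ε * (‖y‖ + 1) := by nlinarith
    have h3 : ε * (‖y‖ + 1) = r / 2 := by rw [hε]; field_simp
    linarith
  have e0 := hok 0 (by simpa using le_of_lt hεpos)
  have e1 := hok ε (by rw [abs_of_pos hεpos])
  have e2 := hok (-ε) (by rw [abs_neg, abs_of_pos hεpos])
  have hC0 : C = 0 := by simpa using e0
  have hB0 : B = 0 := by nlinarith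
  have hA0 : A = 0 := by
    have h1 : A * ε ^ 2 = 0 := by
      rw [hB0, hC0] at e1
      linarith
    rcases mul_eq_zero.mp h1 with h | h
    · exact h
    · exact absurd h (pow_ne_zero 2 (ne_of_gt hεpos))
  exact hA0

/-- avoid finitely (countably) many closed sets with empty interior, near any point -/
lemma avoid {ι : Type} [Countable ι] (P : ι → E3 → Prop)
    (h : ∀ i, ∃ S : Set E3, IsClosed S ∧ interior S = ∅ ∧ ∀ e, e ∉ S → P i e)
    (x : E3) (r : ℝ) (hr : 0 < r) :
    ∃ e : E3, dist e x < r ∧ ∀ i, P i e := by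
  choose S hSc hSi hSP using h
  have hdense : Dense (⋂ i, (S i)ᶜ) := by
    apply dense_iInter_of_isOpen
    · intro i
      exact (hSc i).isOpen_compl
    · intro i
      exact interior_eq_empty_iff_dense_compl.mp (hSi i)
  obtain ⟨e, he, hemem⟩ := hdense.exists_mem_open Metric.isOpen_ball
    ⟨x, Metric.mem_ball_self hr⟩
  refine ⟨e, by simpa [Metric.mem_ball, dist_comm] using hemem, fun i => ?_⟩
  exact hSP i e (by simpa using (Set.mem_iInter.mp he i))

/-- **Nondegeneracy of the triple-point form.** If three segments are pairwise
non-coplanar then the quadratic form detecting common transversal parameters is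
not identically zero. -/
lemma nondeg {di dj dk qij qik : E3}
    (hij : trip di dj qij ≠ 0) (hik : trip di dk qik ≠ 0)
    (hjk : trip dj dk (qik - qij) ≠ 0)
    (H : ∀ e : E3, trip qij dj e * trip di dk e - trip qik dk e * trip di dj e = 0) :
    False := by
  -- polarization
  have B : ∀ a b : E3, trip qij dj a * trip di dk b + trip qij dj b * trip di dk a
      - trip qik dk a * trip di dj b - trip qik dk b * trip di dj a = 0 := by
    intro a b
    have h1 := H (a + b)
    have h2 := H a
    have h3 := H b
    rw [trip_add3 qij dj, trip_add3 di dk, trip_add3 qik dk, trip_add3 di dj] at h1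
    linear_combination h1 - h2 - h3
  -- step A : T = trip di dj dk = 0
  have hfdi : trip qij dj di = - trip di dj qij := trip_swap13 _ _ _
  have hfdi0 : trip qij dj di ≠ 0 := by rw [hfdi]; exact neg_ne_zero.mpr hij
  have hA := B di dj
  rw [trip_rep23, trip_rep23 di dj, trip_rep13 di dj] at hA
  have hgdj : trip di dk dj = 0 := by
    have : trip qij dj di * trip di dk dj = 0 := by linarith
    rcases mul_eq_zero.mp this with h | h
    · exact absurd h hfdi0
    · exact h
  have hT : trip di dj dk = 0 := by
    have := trip_swap23 di dj dk
    rw [this] at *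
    linarith [hgdj]
  -- dk lies in the span of di, dj
  have hκ0 : cross di dj ≠ 0 := by
    intro hc
    apply hij
    show dot (cross di dj) qij = 0
    rw [hc]
    simp [dot, cross]
  obtain ⟨ε, δ, hdk⟩ := exists_comb_of_trip_eq_zero hκ0 hT
  set κ : E3 := cross di dj with hκdef
  set k2 : ℝ := dot κ κ with hk2def
  have hk2 : k2 ≠ 0 := dot_self_ne_zero hκ0
  have hmκ : trip di dj κ = k2 := rfl
  have hgκ : trip di dk κ = δ * k2 := by
    rw [hdk, trip_add2, trip_smul2, trip_smul2, trip_rep12, hmκ]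
    ring
  -- step C : δ * Mij = Mik, so δ ≠ 0
  have hC := B κ di
  rw [trip_rep13 di dk, trip_rep13 di dj] at hC
  have hhdi : trip qik dk di = - trip di dk qik := trip_swap13 _ _ _
  have hδrel : δ * trip di dj qij = trip di dk qik := by
    have h1 : trip qij dj di * (δ * k2) - trip qik dk di * k2 = 0 := by
      rw [← hgκ, ← hmκ]
      linarith
    have h2 : (trip qij dj di * δ - trip qik dk di) * k2 = 0 := by ring_nf; ring_nf at h1; linarith
    have h3 : trip qij dj di * δ - trip qik dk di = 0 := by
      rcases mul_eq_zero.mp h2 with h | h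
      · exact h
      · exact absurd h hk2
    rw [hfdi, hhdi] at h3
    linarith
  have hδ : δ ≠ 0 := by
    intro hc
    rw [hc, zero_mul] at hδrel
    exact hik hδrel.symm
  -- step D : trip qik dk dj = 0
  have hD := B κ dj
  rw [trip_rep23 qij dj, trip_rep23 di dj, hgdj] at hD
  have hhdj : trip qik dk dj = 0 := by
    have h1 : trip qik dk dj * k2 = 0 := by
      rw [← hmκ]
      linarith
    rcases mul_eq_zero.mp h1 with h | h
    · exact h
    · exact absurd h hk2
  -- step E : trip qik dk z = δ * trip qij dj z for all z
  have hgz : ∀ z : E3, trip di dk z = δ * trip di dj z := by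
    intro z
    rw [hdk, trip_add2, trip_smul2, trip_smul2, trip_rep12]
    ring
  have hκrel : trip qik dk κ = δ * trip qij dj κ := by
    have h1 := H κ
    rw [hgκ, hmκ] at h1
    have h2 : (trip qik dk κ - δ * trip qij dj κ) * k2 = 0 := by ring_nf; ring_nf at h1; linarith
    rcases mul_eq_zero.mp h2 with h | h
    · linarith
    · exact absurd h hk2
  have hE : ∀ z : E3, trip qik dk z = δ * trip qij dj z := by
    intro z
    have h1 := B κ z
    rw [hgz z, hgκ, hmκ, hκrel] at h1
    have h2 : (trip qik dk z - δ * trip qij dj z) * k2 = 0 := by ring_nf; ring_nf at h1; linarith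
    rcases mul_eq_zero.mp h2 with h | h
    · linarith
    · exact absurd h hk2
  -- step F
  have hdjdkqik : trip dj dk qik = 0 := by
    have h1 := trip_swap13 qik dk dj
    rw [hhdj] at h1
    linarith
  have hX : trip dj dk qij ≠ 0 := by
    intro hc
    apply hjk
    rw [trip_sub3, hdjdkqik, hc, sub_zero]
  have hε : ε ≠ 0 := by
    intro hc
    apply hX
    rw [hdk, hc, trip_add2, trip_smul2, trip_smul2, trip_rep12]
    ring
  -- step G : the functional identity
  have hstar : ∀ z : E3, ε * trip qik di z = -δ * trip (qik - qij) dj z := by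
    intro z
    have h1 := hE z
    rw [hdk, trip_add2, trip_smul2, trip_smul2] at h1
    rw [trip_sub1]
    linarith
  -- step H
  have hqq1 : trip (qik - qij) dj qik = 0 := by
    have h1 := hstar qik
    rw [trip_rep13, mul_zero] at h1
    have h2 : δ * trip (qik - qij) dj qik = 0 := by linarith
    rcases mul_eq_zero.mp h2 with h | h
    · exact absurd h hδ
    · exact h
  have hqq2 : trip qik di (qik - qij) = 0 := by
    have h1 := hstar (qik - qij)
    rw [trip_rep13, mul_zero] at h1
    rcases mul_eq_zero.mp h1 with h | h
    · exact absurd h hε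
    · exact h
  -- step I
  set qjk : E3 := qik - qij with hqjkdef
  have hqik : qik = qij + qjk := by rw [hqjkdef]; abel
  by_cases hcqq : cross qjk qij = 0
  · -- degenerate case : qjk parallel to qij
    have hqij0 : qij ≠ 0 := by
      intro hc
      rw [hc, trip_zero3] at hij
      exact hij rfl
    have hc2 : cross qij qjk = 0 := by
      rw [cross_anticomm qij qjk, hcqq, neg_zero]
    obtain ⟨ρ, hρ⟩ := exists_smul_of_cross_eq_zero hqij0 hc2
    have h1 : (1 + ρ) * trip dj dk qij = 0 := by
      have h2 := hdjdkqik
      rw [hqik, trip_add3, hρ, trip_smul3] at h2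
      linarith
    have hρval : ρ = -1 := by
      rcases mul_eq_zero.mp h1 with h | h
      · linarith
      · exact absurd h hX
    have hqik0 : qik = 0 := by
      rw [hqik, hρ, hρval, neg_one_smul]
      abel
    rw [hqik0, trip_zero3] at hik
    exact hik rfl
  · -- main case : a common normal to di, dj, qij
    have d3 : dot (cross qjk qij) qij = 0 := trip_rep23 qjk qij
    have e1 : trip qij di qjk = 0 := by
      have h1 := hqq2
      rw [hqik, trip_add1, trip_rep13] at h1
      linarith
    have d1 : dot (cross qjk qij) di = 0 := by
      show trip qjk qij di = 0
      rw [trip_cyclic qjk qij di]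
      exact e1
    have e2 : trip qjk dj qij = 0 := by
      have h1 := hqq1
      rw [hqik, trip_add3, trip_rep13] at h1
      linarith
    have d2 : dot (cross qjk qij) dj = 0 := by
      show trip qjk qij dj = 0
      rw [trip_swap23 qjk qij dj, e2, neg_zero]
    exact hij (trip_eq_zero_of_orth hcqq d1 d2 d3)

lemma proj_eq_iff (u' x y : E3) :
    projAlong u' x = projAlong u' y ↔ ∃ c : ℝ, x - y = c • u' := by
  constructor
  · intro h
    have h0 : projAlong u' (x - y) = 0 := by
      rw [map_sub, h, sub_self]
    have h1 : x - y ∈ ((ℝ ∙ u')ᗮ)ᗮ := Submodule.orthogonalProjectionOnto_eq_zero_iff.mp h0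
    rw [Submodule.orthogonal_orthogonal] at h1
    obtain ⟨c, hc⟩ := Submodule.mem_span_singleton.mp h1
    exact ⟨c, hc.symm⟩
  · rintro ⟨c, hc⟩
    have h1 : x - y ∈ ((ℝ ∙ u')ᗮ)ᗮ := by
      rw [Submodule.orthogonal_orthogonal]
      exact Submodule.mem_span_singleton.mpr ⟨c, hc.symm⟩
    have h0 : projAlong u' (x - y) = 0 := Submodule.orthogonalProjectionOnto_eq_zero_iff.mpr h1
    rw [map_sub, sub_eq_zero] at h0
    exact h0

lemma exists_nu_cross {x : E3} (hx : x ≠ 0) :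
    ∃ ν : E3, ν ≠ 0 ∧ ∀ e, cross x e = 0 → dot ν e = 0 := by
  obtain ⟨ν, hν, hd⟩ := exists_normal1 x
  refine ⟨ν, hν, fun e he => ?_⟩
  obtain ⟨t, ht⟩ := exists_smul_of_cross_eq_zero hx he
  rw [ht, dot_smul2, hd, mul_zero]

@[simp] lemma cross_zero2 (x : E3) : cross x 0 = 0 := by
  refine ext3 ?_ ?_ ?_ <;> simp

end UDE

open UDE Metric

set_option maxHeartbeats 1000000 in
/-- **Existence part of Theorem 1.1.** For an embedded polygonal arc `L` in ℝ³ with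
vertices `p 0, …, p n` (`n ≥ 1`), any unit vector `u` and any `δ > 0`, there is a unit
vector `u'` with `‖u' - u‖ < δ` such that the projection along `u'` maps `L` to an arc
diagram: it is injective on each edge, every point of the plane has at most two preimages
in `L`, double points come from interior points of two distinct edges whose projected
directions are linearly independent, and there are only finitely many double points. -/
theorem unique_diagram_existence
    (n : ℕ) (hn : 1 ≤ n) (p : Fin (n + 1) → E3)
    (hpe : ∀ i : Fin n, p i.castSucc ≠ p i.succ)
    (hemb : ∀ i j : Fin n, (i : ℕ) < (j : ℕ) →
      (((j : ℕ) = (i : ℕ) + 1 →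
          segment ℝ (p i.castSucc) (p i.succ) ∩ segment ℝ (p j.castSucc) (p j.succ)
            = {p i.succ}) ∧
        ((j : ℕ) ≠ (i : ℕ) + 1 →
          segment ℝ (p i.castSucc) (p i.succ) ∩ segment ℝ (p j.castSucc) (p j.succ)
            = ∅)))
    (u : E3) (hu : ‖u‖ = 1) (δ : ℝ) (hδ : 0 < δ) :
    ∃ u' : E3, ‖u'‖ = 1 ∧ ‖u' - u‖ < δ ∧
      (∀ i : Fin n, Set.InjOn (projAlong u') (segment ℝ (p i.castSucc) (p i.succ))) ∧
      (∀ q : ↥((ℝ ∙ u')ᗮ),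
        Set.encard {x ∈ ⋃ i : Fin n, segment ℝ (p i.castSucc) (p i.succ) |
          projAlong u' x = q} ≤ 2) ∧
      (∀ x y : E3,
        x ∈ (⋃ i : Fin n, segment ℝ (p i.castSucc) (p i.succ)) →
        y ∈ (⋃ i : Fin n, segment ℝ (p i.castSucc) (p i.succ)) →
        x ≠ y → projAlong u' x = projAlong u' y →
          x ∉ Set.range p ∧ y ∉ Set.range p ∧
          ∃ i j : Fin n, i ≠ j ∧
            x ∈ segment ℝ (p i.castSucc) (p i.succ) ∧
            y ∈ segment ℝ (p j.castSucc) (p j.succ) ∧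
            LinearIndependent ℝ
              ![projAlong u' (p i.succ - p i.castSucc),
                projAlong u' (p j.succ - p j.castSucc)]) ∧
      {q : ↥((ℝ ∙ u')ᗮ) |
        Set.encard {x ∈ ⋃ i : Fin n, segment ℝ (p i.castSucc) (p i.succ) |
          projAlong u' x = q} = 2}.Finite := by
  classical
  set d : Fin n → E3 := fun i => p i.succ - p i.castSucc with hdd
  have hd0 : ∀ i, d i ≠ 0 := fun i => sub_ne_zero.mpr (Ne.symm (hpe i))
  set M : Fin n → Fin n → ℝ :=
    fun i j => trip (d i) (d j) (p i.castSucc - p j.castSucc) with hMM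
  -- the family of conditions on the direction `e`
  have key := avoid
    (ι := (Fin n) ⊕ ((Fin (n+1) × Fin n) ⊕ ((Fin n × Fin n) ⊕ ((Fin n × Fin n) ⊕
      (Fin n × Fin n × Fin n)))))
    (P := fun idx e => match idx with
      | Sum.inl i => cross (d i) e ≠ 0
      | Sum.inr (Sum.inl (k, j)) => ∀ s c : ℝ,
          p k - (p j.castSucc + s • d j) = c • e → p k = p j.castSucc + s • d j
      | Sum.inr (Sum.inr (Sum.inl (i, j))) => M i j = 0 → ∀ s t c : ℝ,
          (p i.castSucc + s • d i) - (p j.castSucc + t • d j) = c • e →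
            (p i.castSucc + s • d i) = (p j.castSucc + t • d j)
      | Sum.inr (Sum.inr (Sum.inr (Sum.inl (i, j)))) => M i j ≠ 0 →
          trip (d i) (d j) e ≠ 0
      | Sum.inr (Sum.inr (Sum.inr (Sum.inr (i, j, k)))) =>
          (M i j ≠ 0 ∧ M i k ≠ 0 ∧ M j k ≠ 0) →
          trip (p i.castSucc - p j.castSucc) (d j) e * trip (d i) (d k) e
            - trip (p i.castSucc - p k.castSucc) (d k) e * trip (d i) (d j) e ≠ 0)
    ?hyp u (δ/3) (by linarith)
  case hyp =>
    rintro (i | ⟨k, j⟩ | ⟨i, j⟩ | ⟨i, j⟩ | ⟨i, j, k⟩)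
    · -- C1 : e not parallel to an edge
      obtain ⟨ν, hν, himp⟩ := exists_nu_cross (hd0 i)
      refine ⟨{e | dot ν e = 0}, closed_hyperplane ν, empty_interior_hyperplane hν, ?_⟩
      intro e he hc
      exact he (himp e hc)
    · -- C2 : no vertex sees another point of L along e
      obtain ⟨ν, hν, h1, h2⟩ := exists_normal2 (p k - p j.castSucc) (d j)
      refine ⟨{e | dot ν e = 0}, closed_hyperplane ν, empty_interior_hyperplane hν, ?_⟩
      intro e he s c hc
      by_cases hc0 : c = 0
      · rw [hc0, zero_smul] at hc
        exact sub_eq_zero.mp hc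
      · exfalso
        apply he
        have he' : e = c⁻¹ • (p k - (p j.castSucc + s • d j)) := by
          rw [hc, smul_smul, inv_mul_cancel₀ hc0, one_smul]
        have hvec : p k - (p j.castSucc + s • d j) = (p k - p j.castSucc) - s • d j := by
          abel
        show dot ν e = 0
        rw [he', dot_smul2, hvec, dot_sub2, dot_smul2, h1, h2, mul_zero, sub_zero, mul_zero]
    · -- C3 : coplanar pairs yield no double point
      by_cases hM : M i j = 0
      · obtain ⟨ν, hν, h1, h2, h3⟩ := exists_normal3 hM
        refine ⟨{e | dot ν e = 0}, closed_hyperplane ν, empty_interior_hyperplane hν, ?_⟩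
        intro e he _ s t c hc
        by_cases hc0 : c = 0
        · rw [hc0, zero_smul] at hc
          exact sub_eq_zero.mp hc
        · exfalso
          apply he
          have he' : e = c⁻¹ • ((p i.castSucc + s • d i) - (p j.castSucc + t • d j)) := by
            rw [hc, smul_smul, inv_mul_cancel₀ hc0, one_smul]
          have hvec : (p i.castSucc + s • d i) - (p j.castSucc + t • d j)
              = (p i.castSucc - p j.castSucc) + s • d i - t • d j := by abel
          show dot ν e = 0
          rw [he', dot_smul2, hvec, dot_sub2, dot_add2, dot_smul2, dot_smul2, h1, h2, h3]
          ring
      · exact ⟨∅, isClosed_empty, interior_empty, fun e _ h0 => absurd h0 hM⟩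
    · -- C4 : e outside span of two non-coplanar edge directions
      by_cases hM : M i j = 0
      · exact ⟨∅, isClosed_empty, interior_empty, fun e _ h0 => absurd hM h0⟩
      · have hν : cross (d i) (d j) ≠ 0 := by
          intro hc
          apply hM
          show dot (cross (d i) (d j)) (p i.castSucc - p j.castSucc) = 0
          rw [hc]
          simp [dot]
        refine ⟨{e | dot (cross (d i) (d j)) e = 0}, closed_hyperplane _,
          empty_interior_hyperplane hν, ?_⟩
        intro e he _ h0
        exact he h0
    · -- C5 : no common transversal parameter for a non-coplanar triple
      by_cases hM : M i j ≠ 0 ∧ M i k ≠ 0 ∧ M j k ≠ 0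
      · refine ⟨{e | trip (p i.castSucc - p j.castSucc) (d j) e * trip (d i) (d k) e
            - trip (p i.castSucc - p k.castSucc) (d k) e * trip (d i) (d j) e = 0},
            ?_, ?_, ?_⟩
        · exact isClosed_eq
            (((continuous_dot _).mul (continuous_dot _)).sub
              ((continuous_dot _).mul (continuous_dot _))) continuous_const
        · rw [eq_empty_iff_forall_notMem]
          intro x0 hx0
          rw [mem_interior_iff_mem_nhds, Metric.mem_nhds_iff] at hx0
          obtain ⟨r, hr, hball⟩ := hx0
          have hall := quad_vanish hr (fun e hme => hball hme)
          have hveq : (p i.castSucc - p k.castSucc) - (p i.castSucc - p j.castSucc)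
              = p j.castSucc - p k.castSucc := by abel
          refine nondeg (di := d i) (dj := d j) (dk := d k)
            (qij := p i.castSucc - p j.castSucc) (qik := p i.castSucc - p k.castSucc)
            hM.1 hM.2.1 (by rw [hveq]; exact hM.2.2) (fun e => hall e)
        · intro e he _ h0
          exact he h0
      · exact ⟨∅, isClosed_empty, interior_empty, fun e _ h0 => absurd h0 hM⟩
  obtain ⟨e, hedist, hP⟩ := key
  have PC1 : ∀ i : Fin n, cross (d i) e ≠ 0 := fun i => hP (Sum.inl i)
  have PC2 : ∀ (k : Fin (n+1)) (j : Fin n), ∀ s c : ℝ,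
      p k - (p j.castSucc + s • d j) = c • e → p k = p j.castSucc + s • d j :=
    fun k j => hP (Sum.inr (Sum.inl (k, j)))
  have PC3 : ∀ i j : Fin n, M i j = 0 → ∀ s t c : ℝ,
      (p i.castSucc + s • d i) - (p j.castSucc + t • d j) = c • e →
        (p i.castSucc + s • d i) = (p j.castSucc + t • d j) :=
    fun i j => hP (Sum.inr (Sum.inr (Sum.inl (i, j))))
  have PC4 : ∀ i j : Fin n, M i j ≠ 0 → trip (d i) (d j) e ≠ 0 :=
    fun i j => hP (Sum.inr (Sum.inr (Sum.inr (Sum.inl (i, j)))))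
  have PC5 : ∀ i j k : Fin n, (M i j ≠ 0 ∧ M i k ≠ 0 ∧ M j k ≠ 0) →
      trip (p i.castSucc - p j.castSucc) (d j) e * trip (d i) (d k) e
        - trip (p i.castSucc - p k.castSucc) (d k) e * trip (d i) (d j) e ≠ 0 :=
    fun i j k => hP (Sum.inr (Sum.inr (Sum.inr (Sum.inr (i, j, k)))))
  have he0 : e ≠ 0 := by
    intro h0
    apply PC1 ⟨0, hn⟩
    rw [h0]
    exact cross_zero2 _
  -- the chosen direction and unit vector
  have hen : ‖e‖ ≠ 0 := norm_ne_zero_iff.mpr he0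
  refine ⟨‖e‖⁻¹ • e, norm_smul_inv_norm he0, ?_, ?_⟩
  · -- distance estimate
    have h1 : ‖(‖e‖⁻¹ • e) - e‖ = |1 - ‖e‖| := by
      have : (‖e‖⁻¹ • e) - e = (‖e‖⁻¹ - 1) • e := by
        rw [sub_smul, one_smul]
      rw [this, norm_smul, Real.norm_eq_abs]
      rw [← abs_of_nonneg (norm_nonneg e), ← abs_mul]
      congr 1
      field_simp
      rw [abs_of_nonneg (norm_nonneg e)]; ring
    have h2 : |1 - ‖e‖| ≤ ‖e - u‖ := by
      calc |1 - ‖e‖| = |‖u‖ - ‖e‖| := by rw [hu]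
        _ ≤ ‖u - e‖ := abs_norm_sub_norm_le u e
        _ = ‖e - u‖ := norm_sub_rev u e
    have h3 : ‖e - u‖ < δ / 3 := by
      rw [← dist_eq_norm]
      exact hedist
    calc ‖(‖e‖⁻¹ • e) - u‖ ≤ ‖(‖e‖⁻¹ • e) - e‖ + ‖e - u‖ := by
          have := norm_sub_le_norm_sub_add_norm_sub (‖e‖⁻¹ • e) e u
          exact this
      _ < δ / 3 + δ / 3 := by rw [h1]; linarith
      _ < δ := by linarith
  -- kernel characterisation of the projection
  have hPiff : ∀ x y : E3,
      projAlong (‖e‖⁻¹ • e) x = projAlong (‖e‖⁻¹ • e) y ↔ ∃ c : ℝ, x - y = c • e := by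
    intro x y
    rw [proj_eq_iff]
    constructor
    · rintro ⟨c, hc⟩
      exact ⟨c * ‖e‖⁻¹, by rw [hc, smul_smul]⟩
    · rintro ⟨c, hc⟩
      refine ⟨c * ‖e‖, ?_⟩
      rw [hc, smul_smul, mul_assoc, mul_inv_cancel₀ hen, mul_one]
  have hseg : ∀ (i : Fin n) (x : E3),
      x ∈ segment ℝ (p i.castSucc) (p i.succ) ↔
        ∃ s : ℝ, s ∈ Set.Icc (0:ℝ) 1 ∧ x = p i.castSucc + s • d i := by
    intro i x
    rw [segment_eq_image']
    simp only [Set.mem_image]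
    constructor
    · rintro ⟨s, hs, hsx⟩
      exact ⟨s, hs, hsx.symm⟩
    · rintro ⟨s, hs, hsx⟩
      exact ⟨s, hs, hsx.symm⟩
  have C1use : ∀ (i : Fin n) (s t c : ℝ), (s - t) • d i = c • e → s = t := by
    intro i s t c h
    by_cases hc0 : c = 0
    · rw [hc0, zero_smul] at h
      rcases smul_eq_zero.mp h with h' | h'
      · exact sub_eq_zero.mp h'
      · exact absurd h' (hd0 i)
    · exfalso
      apply PC1 i
      have he' : e = (c⁻¹ * (s - t)) • d i := by
        rw [← smul_smul, h, smul_smul, inv_mul_cancel₀ hc0, one_smul]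

      rw [he', cross_smul2, UDE.cross_self, smul_zero]
  -- the master analysis of a double point
  have core : ∀ x y : E3,
      x ∈ (⋃ i : Fin n, segment ℝ (p i.castSucc) (p i.succ)) →
      y ∈ (⋃ i : Fin n, segment ℝ (p i.castSucc) (p i.succ)) →
      x ≠ y → projAlong (‖e‖⁻¹ • e) x = projAlong (‖e‖⁻¹ • e) y →
      ∃ (i j : Fin n) (s t c : ℝ), i ≠ j ∧ s ∈ Set.Icc (0:ℝ) 1 ∧ t ∈ Set.Icc (0:ℝ) 1 ∧
        c ≠ 0 ∧ x = p i.castSucc + s • d i ∧ y = p j.castSucc + t • d j ∧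
        x - y = c • e ∧ M i j ≠ 0 ∧ trip (d i) (d j) e ≠ 0 ∧
        s = -(trip (p i.castSucc - p j.castSucc) (d j) e) / trip (d i) (d j) e ∧
        x ∉ Set.range p ∧ y ∉ Set.range p := by
    intro x y hx hy hxy hproj
    obtain ⟨c, hc⟩ := (hPiff x y).mp hproj
    rw [Set.mem_iUnion] at hx hy
    obtain ⟨i, hxi⟩ := hx
    obtain ⟨j, hyj⟩ := hy
    obtain ⟨s, hs, hxs⟩ := (hseg i x).mp hxi
    obtain ⟨t, ht, hyt⟩ := (hseg j y).mp hyj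
    have hc0 : c ≠ 0 := by
      intro h0
      rw [h0, zero_smul] at hc
      exact hxy (sub_eq_zero.mp hc)
    have hij : i ≠ j := by
      intro hij0
      subst hij0
      have hv : (s - t) • d i = c • e := by
        rw [sub_smul, ← hc, hxs, hyt]
        abel
      have hst := C1use i s t c hv
      exact hxy (by rw [hxs, hyt, hst])
    have hMij : M i j ≠ 0 := by
      intro h0
      have h1 := PC3 i j h0 s t c (by rw [← hxs, ← hyt]; exact hc)
      exact hxy (by rw [hxs, hyt]; exact h1)
    have htrip : trip (d i) (d j) e ≠ 0 := PC4 i j hMij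
    have hveq : (p i.castSucc - p j.castSucc) + s • d i - t • d j = c • e := by
      rw [← hc, hxs, hyt]
      abel
    have hsval : trip (p i.castSucc - p j.castSucc) (d j) e
        + s * trip (d i) (d j) e = 0 := by
      have h1 := congrArg (fun v => trip v (d j) e) hveq
      rw [trip_sub1, trip_add1, trip_smul1, trip_smul1, trip_rep12, trip_smul1,
        trip_rep13] at h1
      linarith [h1]
    have hseq : s = -(trip (p i.castSucc - p j.castSucc) (d j) e)
        / trip (d i) (d j) e := by
      field_simp
      linarith
    have hxnv : x ∉ Set.range p := by
      rintro ⟨k, hk⟩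
      have h1 := PC2 k j t c (by rw [hk, ← hyt]; exact hc)
      exact hxy (by rw [← hk, h1, ← hyt])
    have hynv : y ∉ Set.range p := by
      rintro ⟨k, hk⟩
      have h1 := PC2 k i s (-c) (by rw [hk, ← hxs, neg_smul, ← hc]; abel)
      exact hxy (by rw [hxs, ← h1, hk])
    exact ⟨i, j, s, t, c, hij, hs, ht, hc0, hxs, hyt, hc, hMij, htrip, hseq, hxnv, hynv⟩
  -- a point on two distinct edges is a vertex
  have hedge : ∀ (i i' : Fin n), i ≠ i' → ∀ z : E3,
      z ∈ segment ℝ (p i.castSucc) (p i.succ) →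
      z ∈ segment ℝ (p i'.castSucc) (p i'.succ) → z ∈ Set.range p := by
    intro i i' hne z h1 h2
    have hvne : (i : ℕ) ≠ (i' : ℕ) := fun h => hne (Fin.ext h)
    rcases lt_or_gt_of_ne hvne with hlt | hgt
    · rcases hemb i i' hlt with ⟨ha, hb⟩
      by_cases hsucc : (i' : ℕ) = (i : ℕ) + 1
      · have hz : z ∈ ({p i.succ} : Set E3) := (ha hsucc) ▸ ⟨h1, h2⟩
        exact ⟨i.succ, (Set.mem_singleton_iff.mp hz).symm⟩
      · have hz : z ∈ (∅ : Set E3) := (hb hsucc) ▸ ⟨h1, h2⟩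
        exact absurd hz (Set.notMem_empty z)
    · rcases hemb i' i hgt with ⟨ha, hb⟩
      by_cases hsucc : (i : ℕ) = (i' : ℕ) + 1
      · have hz : z ∈ ({p i'.succ} : Set E3) := (ha hsucc) ▸ ⟨h2, h1⟩
        exact ⟨i'.succ, (Set.mem_singleton_iff.mp hz).symm⟩
      · have hz : z ∈ (∅ : Set E3) := (hb hsucc) ▸ ⟨h2, h1⟩
        exact absurd hz (Set.notMem_empty z)
  refine ⟨?_, ?_, ?_, ?_⟩
  · -- (i) injectivity on each edge
    intro i x hx y hy hproj
    obtain ⟨s, hs, hxs⟩ := (hseg i x).mp hx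
    obtain ⟨t, ht, hyt⟩ := (hseg i y).mp hy
    obtain ⟨c, hc⟩ := (hPiff x y).mp hproj
    have hv : (s - t) • d i = c • e := by
      rw [sub_smul, ← hc, hxs, hyt]
      abel
    have hst := C1use i s t c hv
    rw [hxs, hyt, hst]
  · -- (ii) at most two preimages
    intro q
    by_contra hgt
    have h2lt : (2 : ℕ∞) < Set.encard {x ∈ ⋃ i : Fin n,
        segment ℝ (p i.castSucc) (p i.succ) | projAlong (‖e‖⁻¹ • e) x = q} :=
      not_le.mp hgt
    have h3le : (3 : ℕ∞) ≤ Set.encard {x ∈ ⋃ i : Fin n,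
        segment ℝ (p i.castSucc) (p i.succ) | projAlong (‖e‖⁻¹ • e) x = q} := by
      exact Order.add_one_le_of_lt h2lt
    obtain ⟨T, hTsub, hT3⟩ := Set.exists_subset_encard_eq h3le
    obtain ⟨x, y, z, hxy, hxz, hyz, rfl⟩ := Set.encard_eq_three.mp hT3
    have hxm := hTsub (by simp : x ∈ ({x, y, z} : Set E3))
    have hym := hTsub (by simp : y ∈ ({x, y, z} : Set E3))
    have hzm := hTsub (by simp : z ∈ ({x, y, z} : Set E3))
    obtain ⟨hxU, hxq⟩ := hxm
    obtain ⟨hyU, hyq⟩ := hym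
    obtain ⟨hzU, hzq⟩ := hzm
    have hpxy : projAlong (‖e‖⁻¹ • e) x = projAlong (‖e‖⁻¹ • e) y := by rw [hxq, hyq]
    have hpxz : projAlong (‖e‖⁻¹ • e) x = projAlong (‖e‖⁻¹ • e) z := by rw [hxq, hzq]
    have hpyz : projAlong (‖e‖⁻¹ • e) y = projAlong (‖e‖⁻¹ • e) z := by rw [hyq, hzq]
    obtain ⟨i, j, s, t, c, hij, hsI, htI, hc0, hxs, hyt, hcv, hMij, htripij, hseqij,
      hxnv, hynv⟩ := core x y hxU hyU hxy hpxy
    obtain ⟨i', k, s', t', c', hik', hsI', htI', hc0', hxs', hzt', hcv', hMik', htripik,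
      hseqik, hxnv', hznv⟩ := core x z hxU hzU hxz hpxz
    obtain ⟨j', k', s'', t'', c'', hjk', hsI'', htI'', hc0'', hys'', hzt'', hcv'',
      hMjk', htripjk, hseqjk, hynv'', hznv''⟩ := core y z hyU hzU hyz hpyz
    -- identify the edges
    have hii' : i' = i := by
      by_contra hne
      exact hxnv (hedge i i' (fun h => hne h.symm) x
        ((hseg i x).mpr ⟨s, hsI, hxs⟩) ((hseg i' x).mpr ⟨s', hsI', hxs'⟩))
    rw [hii'] at hik' hxs' hMik' htripik hseqik
    have hjj' : j' = j := by
      by_contra hne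
      exact hynv (hedge j j' (fun h => hne h.symm) y
        ((hseg j y).mpr ⟨t, htI, hyt⟩) ((hseg j' y).mpr ⟨s'', hsI'', hys''⟩))
    rw [hjj'] at hjk' hys'' hMjk' htripjk hseqjk
    have hkk' : k' = k := by
      by_contra hne
      exact hznv (hedge k k' (fun h => hne h.symm) z
        ((hseg k z).mpr ⟨t', htI', hzt'⟩) ((hseg k' z).mpr ⟨t'', htI'', hzt''⟩))
    rw [hkk'] at hjk' hzt'' hMjk' htripjk hseqjk
    -- the two parameters of x agree
    have hss' : s = s' := by
      have hveq : (s - s') • d i = 0 := by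
        rw [sub_smul]
        have h1 : p i.castSucc + s • d i = p i.castSucc + s' • d i := by
          rw [← hxs, ← hxs']
        have h2 : s • d i = s' • d i := by
          have := congrArg (fun v => v - p i.castSucc) h1
          simpa using this
        rw [h2, sub_self]
      rcases smul_eq_zero.mp hveq with h' | h'
      · exact sub_eq_zero.mp h'
      · exact absurd h' (hd0 i)
    -- contradiction with C5
    apply PC5 i j k ⟨hMij, hMik', hMjk'⟩
    have hNeq : -(trip (p i.castSucc - p j.castSucc) (d j) e) / trip (d i) (d j) e
        = -(trip (p i.castSucc - p k.castSucc) (d k) e) / trip (d i) (d k) e := by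
      rw [← hseqij, hss', hseqik]
    field_simp [htripij, htripik] at hNeq
    linear_combination -hNeq
  · -- (iii) structure of double points
    intro x y hx hy hxy hproj
    obtain ⟨i, j, s, t, c, hij, hsI, htI, hc0, hxs, hyt, hcv, hMij, htripij, hseqij,
      hxnv, hynv⟩ := core x y hx hy hxy hproj
    refine ⟨hxnv, hynv, i, j, hij, (hseg i x).mpr ⟨s, hsI, hxs⟩,
      (hseg j y).mpr ⟨t, htI, hyt⟩, ?_⟩
    rw [linearIndependent_fin2]
    constructor
    · simp only [Matrix.cons_val_one, Matrix.head_cons]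
      intro h0
      apply htripij
      have h1 : projAlong (‖e‖⁻¹ • e) (p j.succ - p j.castSucc)
          = projAlong (‖e‖⁻¹ • e) 0 := by rw [map_zero]; exact h0
      obtain ⟨c', hc'⟩ := (hPiff _ _).mp h1
      rw [sub_zero] at hc'
      have hdj : d j = c' • e := hc'
      rw [show trip (d i) (d j) e = trip (d i) (c' • e) e by rw [← hdj]]
      rw [trip_smul2, trip_rep23, mul_zero]
    · intro α
      simp only [Matrix.cons_val_one, Matrix.head_cons, Matrix.cons_val_zero]
      intro hα
      apply htripij
      have h1 : projAlong (‖e‖⁻¹ • e) (α • (p j.succ - p j.castSucc))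
          = projAlong (‖e‖⁻¹ • e) (p i.succ - p i.castSucc) := by
        rw [map_smul]
        exact hα
      obtain ⟨c', hc'⟩ := (hPiff _ _).mp h1
      have hdi : d i = α • d j - c' • e := by
        have h2 : α • d j - d i = c' • e := hc'
        rw [← h2]
        abel
      rw [show trip (d i) (d j) e = trip (α • d j - c' • e) (d j) e by rw [← hdi]]
      rw [trip_sub1, trip_smul1, trip_smul1, trip_rep12, trip_rep13]
      ring
  · -- (iv) finitely many double points
    apply Set.Finite.subset (Set.finite_range (fun ij : Fin n × Fin n =>
      projAlong (‖e‖⁻¹ • e) (p ij.1.castSucc +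
        (-(trip (p ij.1.castSucc - p ij.2.castSucc) (d ij.2) e)
          / trip (d ij.1) (d ij.2) e) • d ij.1)))
    intro q hq
    rw [Set.mem_setOf_eq] at hq
    obtain ⟨x, y, hxy, hset⟩ := Set.encard_eq_two.mp hq
    have hxm : x ∈ {x ∈ ⋃ i : Fin n, segment ℝ (p i.castSucc) (p i.succ) |
        projAlong (‖e‖⁻¹ • e) x = q} := by
      rw [hset]; exact Set.mem_insert _ _
    have hym : y ∈ {x ∈ ⋃ i : Fin n, segment ℝ (p i.castSucc) (p i.succ) |
        projAlong (‖e‖⁻¹ • e) x = q} := by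
      rw [hset]; exact Set.mem_insert_iff.mpr (Or.inr rfl)
    obtain ⟨hxU, hxq⟩ := hxm
    obtain ⟨hyU, hyq⟩ := hym
    have hproj : projAlong (‖e‖⁻¹ • e) x = projAlong (‖e‖⁻¹ • e) y := by rw [hxq, hyq]
    obtain ⟨i, j, s, t, c, hij, hsI, htI, hc0, hxs, hyt, hcv, hMij, htripij, hseqij,
      hxnv, hynv⟩ := core x y hxU hyU hxy hproj
    refine ⟨(i, j), ?_⟩
    show projAlong (‖e‖⁻¹ • e) _ = q
    rw [← hseqij, ← hxs]
    exact hxq
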